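/- Comparison of Cauchy kernel and suppressed kernel: for a nonnegative 1-Lipschitz function Φ on ℂ and x ≠ y, |1/(x−y) − conj(x−y)/(|x−y|² + Φ(x)Φ(y))| ≤ Φ(x)(Φ(x) + |x−y|)/|x−y|³. -/

import Mathlib

open Complex

/-- Comparison of the Cauchy kernel and the suppressed kernel: for a nonnegative
1-Lipschitz function `Φ` on `ℂ` and `x ≠ y`,
`|1/(x−y) − conj(x−y)/(|x−y|² + Φ(x)Φ(y))| ≤ Φ(x)(Φ(x) + |x−y|)/|x−y|³`. -/
theorem cauchy_vs_suppressed_kernel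
    (Φ : ℂ → ℝ) (hΦ0 : ∀ x, 0 ≤ Φ x)
    (hΦlip : ∀ x y : ℂ, |Φ x - Φ y| ≤ ‖x - y‖)
    (x y : ℂ) (hxy : x ≠ y) :
    ‖(1 / (x - y) -
         (starRingEnd ℂ) (x - y) / (((‖x - y‖) ^ 2 + Φ x * Φ y : ℝ) : ℂ))‖ ≤
      Φ x * (Φ x + ‖x - y‖) / (‖x - y‖) ^ 3 := by
  set z := x - y with hzdef
  have hz : z ≠ 0 := sub_ne_zero.mpr hxy
  set d := ‖z‖ with hddef
  have hd0 : 0 < d := by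
    simpa [hddef] using (norm_pos_iff.mpr hz)
  have hp : 0 ≤ Φ x * Φ y := mul_nonneg (hΦ0 x) (hΦ0 y)
  have hden : 0 < d ^ 2 + Φ x * Φ y := by positivity
  have hzz : z * (starRingEnd ℂ) z = ((d ^ 2 : ℝ) : ℂ) := by
    rw [Complex.mul_conj]
    norm_cast
    rw [hddef, Complex.sq_norm]
  have h2 : ((d ^ 2 + Φ x * Φ y : ℝ) : ℂ) ≠ 0 := by
    exact_mod_cast hden.ne'
  have h1 : ((d ^ 2 : ℝ) : ℂ) ≠ 0 := by
    exact_mod_cast (pow_pos hd0 2).ne'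
  have key : 1 / z - (starRingEnd ℂ) z / ((d ^ 2 + Φ x * Φ y : ℝ) : ℂ)
      = (starRingEnd ℂ) z * ((Φ x * Φ y : ℝ) : ℂ) /
        (((d ^ 2 : ℝ) : ℂ) * ((d ^ 2 + Φ x * Φ y : ℝ) : ℂ)) := by
    have h1z : 1 / z = (starRingEnd ℂ) z / ((d ^ 2 : ℝ) : ℂ) := by
      rw [div_eq_div_iff hz h1, one_mul, mul_comm, hzz]
    rw [h1z, div_sub_div _ _ h1 h2]
    congr 1
    push_cast
    ring
  rw [key, norm_div, norm_mul, norm_mul, Complex.norm_conj, Complex.norm_real,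
    Complex.norm_real, Complex.norm_real, Real.norm_eq_abs, Real.norm_eq_abs, Real.norm_eq_abs, _root_.abs_of_nonneg hp,
    _root_.abs_of_nonneg (pow_pos hd0 2).le, _root_.abs_of_nonneg hden.le, ← hddef]
  have hΦy : Φ y ≤ Φ x + d := by
    have h := hΦlip y x
    rw [abs_sub_comm] at h
    have : ‖y - x‖ = d := by rw [hddef, hzdef, norm_sub_rev]
    rw [this] at h
    have := abs_le.mp h
    linarith [this.1]
  rw [div_le_div_iff₀ (by positivity) (by positivity)]
  have hA : Φ x * Φ y * d ^ 4 ≤ Φ x * (Φ x + d) * d ^ 4 :=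
    mul_le_mul_of_nonneg_right (mul_le_mul_of_nonneg_left hΦy (hΦ0 x))
      (by positivity)
  have hB : 0 ≤ Φ x * (Φ x + d) * (d ^ 2 * (Φ x * Φ y)) := by
    have := hΦ0 x
    positivity
  nlinarith [hA, hB]
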